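/- Let r ≥ 2 and t ≥ 2 be integers and let F = (F_1, …, F_r) be any r-direction-vector in ℝ¹ (so each F_j is either ∅ or {1}). Every F-family (B_1, …, B_r) in ℝ¹ with |B_j| = n_j for j = 1, …, r whose intersection hypergraph H is K_{t,…,t}^{(r)}-free satisfies: the number of hyperedges of H is strictly less than 4^{r-1} · g_t(n_1, …, n_r). -/

import Mathlib

open Set

/-- The axis-parallel box in `ℝ^d` with corner functions `lo` and `hi`. -/
def boxSet {d : ℕ} (lo hi : Fin d → ℝ) : Set (Fin d → ℝ) :=
  {x | ∀ i, x i ∈ Set.Icc (lo i) (hi i)}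

/-- `S` is an axis-parallel box in `ℝ^d` with direction set `F`
(degenerate coordinates allowed). -/
def IsBoxDir {d : ℕ} (S : Set (Fin d → ℝ)) (F : Set (Fin d)) : Prop :=
  ∃ lo hi : Fin d → ℝ, (∀ i, lo i ≤ hi i) ∧ S = boxSet lo hi ∧ F = {i | lo i < hi i}

/-- `S` is an axis-parallel box in `ℝ^d` (with some direction set). -/
def IsBox {d : ℕ} (S : Set (Fin d → ℝ)) : Prop :=
  ∃ lo hi : Fin d → ℝ, (∀ i, lo i ≤ hi i) ∧ S = boxSet lo hi

/-- The number of hyperedges of the `r`-partite `r`-uniform intersection hypergraph of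
the indexed families `B j : Fin (n j) → Set α`. -/
noncomputable def hyperedgeCount {α : Type} {r : ℕ} (n : Fin r → ℕ)
    (B : ∀ j : Fin r, Fin (n j) → Set α) : ℕ :=
  Nat.card {f : ∀ j : Fin r, Fin (n j) // (⋂ j, B j (f j)).Nonempty}

/-- The intersection hypergraph of the families `B j` is `K_{t,…,t}`-free:
there are no `t`-element subfamilies `S j ⊆ B j` all of whose transversal tuples
have a common point. -/
def KFree {α : Type} {r : ℕ} (t : ℕ) (n : Fin r → ℕ)
    (B : ∀ j : Fin r, Fin (n j) → Set α) : Prop :=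
  ¬ ∃ S : ∀ j : Fin r, Finset (Fin (n j)),
      (∀ j, (S j).card = t) ∧
      ∀ f : ∀ j : Fin r, Fin (n j), (∀ j, f j ∈ S j) → (⋂ j, B j (f j)).Nonempty

/-- `g_t(n_1, …, n_r) = t · n_1 ⋯ n_r · (1/n_1 + ⋯ + 1/n_r)`. -/
noncomputable def gZ {r : ℕ} (t : ℕ) (n : Fin r → ℕ) : ℝ :=
  (t : ℝ) * (∏ j, (n j : ℝ)) * (∑ j, 1 / (n j : ℝ))

/-- `F` is a 2-coherent direction-vector: for some `k`, the common directions of all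
families other than `k` number at least two. -/
def TwoCoherent {d r : ℕ} (F : Fin r → Set (Fin d)) : Prop :=
  ∃ k : Fin r, 2 ≤ Set.ncard {i : Fin d | ∀ j : Fin r, j ≠ k → i ∈ F j}



private lemma telescope_prod {ι : Type*} [DecidableEq ι] (E : Finset ι) (x y cap : ι → ℕ)
    (hxy : ∀ j ∈ E, x j + y j ≤ cap j) :
    ∏ j ∈ E, (x j + y j) ≤ ∏ j ∈ E, x j + ∑ j ∈ E, y j * ∏ i ∈ E.erase j, cap i := by
  induction E using Finset.induction_on with
  | empty => simp
  | @insert a s ha ih =>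
    have hxys : ∀ j ∈ s, x j + y j ≤ cap j := fun j hj => hxy j (Finset.mem_insert_of_mem hj)
    have hcapa : x a + y a ≤ cap a := hxy a (Finset.mem_insert_self a s)
    have hxs : ∏ j ∈ s, x j ≤ ∏ j ∈ s, cap j :=
      Finset.prod_le_prod' fun j hj => le_trans (Nat.le_add_right _ _) (hxys j hj)
    have h2 : ∀ j ∈ s, ∏ i ∈ (insert a s).erase j, cap i = cap a * ∏ i ∈ s.erase j, cap i := by
      intro j hj
      have haj : a ≠ j := fun h => ha (h ▸ hj)
      rw [Finset.erase_insert_of_ne haj]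
      exact Finset.prod_insert (fun h => ha (Finset.mem_of_mem_erase h))
    rw [Finset.prod_insert ha, Finset.prod_insert ha, Finset.sum_insert ha, Finset.erase_insert ha]
    calc (x a + y a) * ∏ j ∈ s, (x j + y j)
        ≤ (x a + y a) * (∏ j ∈ s, x j + ∑ j ∈ s, y j * ∏ i ∈ s.erase j, cap i) :=
          Nat.mul_le_mul_left _ (ih hxys)
      _ = x a * ∏ j ∈ s, x j + (y a * ∏ j ∈ s, x j
            + (x a + y a) * ∑ j ∈ s, y j * ∏ i ∈ s.erase j, cap i) := by ring
      _ ≤ x a * ∏ j ∈ s, x j + (y a * ∏ j ∈ s, cap j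
            + ∑ j ∈ s, y j * ∏ i ∈ (insert a s).erase j, cap i) := by
          refine Nat.add_le_add_left (Nat.add_le_add (Nat.mul_le_mul_left _ hxs) ?_) _
          calc (x a + y a) * ∑ j ∈ s, y j * ∏ i ∈ s.erase j, cap i
              ≤ cap a * ∑ j ∈ s, y j * ∏ i ∈ s.erase j, cap i :=
                Nat.mul_le_mul_right _ hcapa
            _ = ∑ j ∈ s, y j * (cap a * ∏ i ∈ s.erase j, cap i) := by
                rw [Finset.mul_sum]; exact Finset.sum_congr rfl fun j hj => by ring
            _ = ∑ j ∈ s, y j * ∏ i ∈ (insert a s).erase j, cap i :=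
                Finset.sum_congr rfl fun j hj => by rw [h2 j hj]

private lemma group_div (t : ℕ) (ht : 0 < t) (g : ℕ → ℕ) :
    ∀ m, ∑ i ∈ Finset.range (t*m), g (i/t) = ∑ c ∈ Finset.range m, t * g c := by
  intro m; induction m with
  | zero => simp
  | succ m ih =>
    rw [Finset.sum_range_succ, ← ih]
    have h1 : t*(m+1) = t*m + t := by ring
    rw [h1, Finset.range_eq_Ico, ← Finset.sum_Ico_consecutive _ (Nat.zero_le _) (Nat.le_add_right _ _),
      ← Finset.range_eq_Ico]
    congr 1
    have hval : ∀ i ∈ Finset.Ico (t*m) (t*m+t), g (i/t) = g m := by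
      intro i hi; rw [Finset.mem_Ico] at hi
      congr 1
      have hmt : m * t ≤ i := by rw [mul_comm]; exact hi.1
      have hmt2 : i < (m+1) * t := by rw [mul_comm]; omega
      have h2 : m ≤ i / t := (Nat.le_div_iff_mul_le ht).2 hmt
      have h3 : i / t < m + 1 := (Nat.div_lt_iff_lt_mul ht).2 hmt2
      omega
    rw [Finset.sum_congr rfl hval, Finset.sum_const, Nat.card_Ico]
    have h4 : t * m + t - t * m = t := by omega
    rw [h4, smul_eq_mul]

open Classical in
private noncomputable def mmN {m : ℕ} (lo hi : Fin m → ℝ) (x : ℝ) : ℕ :=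
  ((Finset.univ : Finset (Fin m)).filter fun b => lo b ≤ x ∧ x ≤ hi b).card

open Classical in
private noncomputable def llN {m : ℕ} (lo hi : Fin m → ℝ) (u v : ℝ) : ℕ :=
  ((Finset.univ : Finset (Fin m)).filter fun b => lo b ≤ u ∧ v ≤ hi b).card

open Classical in
private noncomputable def ssN {m : ℕ} (lo hi : Fin m → ℝ) (u v : ℝ) : ℕ :=
  ((Finset.univ : Finset (Fin m)).filter fun b =>
    (u < lo b ∧ lo b ≤ v) ∨ (u ≤ hi b ∧ hi b < v)).card

private lemma mmN_le {m : ℕ} (lo hi : Fin m → ℝ) (x : ℝ) : mmN lo hi x ≤ m :=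
  le_trans (Finset.card_le_card (Finset.subset_univ _)) (by simp)

private lemma ssN_le {m : ℕ} (lo hi : Fin m → ℝ) (u v : ℝ) : ssN lo hi u v ≤ m :=
  le_trans (Finset.card_le_card (Finset.subset_univ _)) (by simp)

private lemma llN_le {m : ℕ} (lo hi : Fin m → ℝ) (u v : ℝ) : llN lo hi u v ≤ m :=
  le_trans (Finset.card_le_card (Finset.subset_univ _)) (by simp)

private lemma sum_card_filter_le {m mq : ℕ} (P : ℕ → Fin m → Prop) [∀ c, DecidablePred (P c)]
    (hdisj : ∀ c c', c < c' → ∀ b, P c b → P c' b → False) :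
    ∑ c ∈ Finset.range mq, ((Finset.univ : Finset (Fin m)).filter (P c)).card ≤ m := by
  classical
  rw [← Finset.card_biUnion]
  · exact le_trans (Finset.card_le_card (Finset.subset_univ _)) (by simp)
  · intro c hc c' hc' hne
    rw [Function.onFun, Finset.disjoint_left]
    intro b hb hb'
    rw [Finset.mem_filter] at hb hb'
    rcases lt_or_gt_of_ne hne with h | h
    · exact hdisj c c' h b hb.2 hb'.2
    · exact hdisj c' c h b hb'.2 hb.2

private lemma window_bound {r : ℕ} (t : ℕ) (E : Finset (Fin r))
    (M : Fin r → ℕ) (lo hi : ∀ j : Fin r, Fin (M j) → ℝ) (x u v : ℝ)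
    (hux : u ≤ x) (hxv : x ≤ v)
    (hfree : ∃ j ∈ E, llN (lo j) (hi j) u v + 1 ≤ t) :
    ∏ j ∈ E, mmN (lo j) (hi j) x
      ≤ (t-1) * (∑ j ∈ E, ∏ i ∈ E.erase j, M i)
        + ∑ j ∈ E, ssN (lo j) (hi j) u v * ∏ i ∈ E.erase j, M i := by
  classical
  obtain ⟨j0, hj0E, hj0⟩ := hfree
  have hdec : ∀ j ∈ E, mmN (lo j) (hi j) x ≤ llN (lo j) (hi j) u v + ssN (lo j) (hi j) u v := by
    intro j _
    unfold mmN llN ssN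
    refine le_trans (Finset.card_le_card ?_) (Finset.card_union_le _ _)
    intro b hb
    rw [Finset.mem_filter] at hb
    obtain ⟨-, hb1, hb2⟩ := hb
    rw [Finset.mem_union, Finset.mem_filter, Finset.mem_filter]
    by_cases hc1 : lo j b ≤ u
    · by_cases hc2 : v ≤ hi j b
      · exact Or.inl ⟨Finset.mem_univ _, hc1, hc2⟩
      · exact Or.inr ⟨Finset.mem_univ _, Or.inr ⟨le_trans hux hb2, lt_of_not_ge hc2⟩⟩
    · exact Or.inr ⟨Finset.mem_univ _, Or.inl ⟨lt_of_not_ge hc1, le_trans hb1 hxv⟩⟩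
  have hcap : ∀ j ∈ E, llN (lo j) (hi j) u v + ssN (lo j) (hi j) u v ≤ M j := by
    intro j _
    unfold llN ssN
    rw [← Finset.card_union_of_disjoint]
    · exact le_trans (Finset.card_le_card (Finset.subset_univ _)) (by simp)
    · rw [Finset.disjoint_left]
      intro b hb hb'
      rw [Finset.mem_filter] at hb hb'
      rcases hb'.2 with h | h
      · exact absurd hb.2.1 (not_le.2 h.1)
      · exact absurd hb.2.2 (not_le.2 h.2)
  calc ∏ j ∈ E, mmN (lo j) (hi j) x
      ≤ ∏ j ∈ E, (llN (lo j) (hi j) u v + ssN (lo j) (hi j) u v) :=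
        Finset.prod_le_prod' hdec
    _ ≤ ∏ j ∈ E, llN (lo j) (hi j) u v
          + ∑ j ∈ E, ssN (lo j) (hi j) u v * ∏ i ∈ E.erase j, M i :=
        telescope_prod E _ _ M hcap
    _ ≤ (t-1) * (∑ j ∈ E, ∏ i ∈ E.erase j, M i)
          + ∑ j ∈ E, ssN (lo j) (hi j) u v * ∏ i ∈ E.erase j, M i := by
        refine Nat.add_le_add_right ?_ _
        calc ∏ j ∈ E, llN (lo j) (hi j) u v
            = llN (lo j0) (hi j0) u v * ∏ j ∈ E.erase j0, llN (lo j) (hi j) u v :=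
              (Finset.mul_prod_erase E _ hj0E).symm
          _ ≤ (t-1) * ∏ j ∈ E.erase j0, M j :=
              Nat.mul_le_mul (by omega) (Finset.prod_le_prod' fun j _ => llN_le _ _ _ _)
          _ ≤ (t-1) * ∑ j ∈ E, ∏ i ∈ E.erase j, M i :=
              Nat.mul_le_mul_left _ (Finset.single_le_sum
                (f := fun j => ∏ i ∈ E.erase j, M i) (fun _ _ => Nat.zero_le _) hj0E)
private lemma stab {r : ℕ} (t : ℕ) (ht : 2 ≤ t) (E : Finset (Fin r)) (hE : E.Nonempty)
    (M : Fin r → ℕ) (lo hi : ∀ j : Fin r, Fin (M j) → ℝ)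
    (N : ℕ) (p : Fin N → ℝ)
    (H : ∀ u v : ℝ, u ≤ v →
      t ≤ ((Finset.univ : Finset (Fin N)).filter fun i => u ≤ p i ∧ p i ≤ v).card →
      ∃ j ∈ E, llN (lo j) (hi j) u v + 1 ≤ t) :
    ∑ i : Fin N, ∏ j ∈ E, mmN (lo j) (hi j) (p i)
      ≤ (t-1) * N * (∑ j ∈ E, ∏ i ∈ E.erase j, M i)
        + (3*t-1) * E.card * ∏ j ∈ E, M j := by
  classical
  rcases Nat.eq_zero_or_pos N with rfl | hN0
  · simp
  set σ := Tuple.sort p with hσ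
  have hmono : Monotone (p ∘ σ) := Tuple.monotone_sort p
  set Qc : ℕ → ℝ := fun a => p (σ ⟨min a (N-1), by omega⟩) with hQcdef
  have hQc : Monotone Qc := by
    intro a b hab
    exact hmono (Fin.mk_le_mk.2 (by omega))
  have hQeq : ∀ (a : ℕ) (ha : a < N), Qc a = p (σ ⟨a, ha⟩) := by
    intro a ha
    have h1 : (⟨min a (N-1), by omega⟩ : Fin N) = ⟨a, ha⟩ := Fin.ext (by simp; omega)
    simp only [hQcdef]
    exact congrArg (fun z => p (σ z)) h1
  have hre : ∑ i : Fin N, ∏ j ∈ E, mmN (lo j) (hi j) (p i)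
      = ∑ i ∈ Finset.range N, ∏ j ∈ E, mmN (lo j) (hi j) (Qc i) := by
    rw [← Equiv.sum_comp σ (fun i => ∏ j ∈ E, mmN (lo j) (hi j) (p i)),
      ← Fin.sum_univ_eq_sum_range (fun a => ∏ j ∈ E, mmN (lo j) (hi j) (Qc a)) N]
    refine Finset.sum_congr rfl fun i _ => ?_
    rw [hQeq i.val i.isLt]
  rw [hre]
  by_cases hNt : N < t
  · calc ∑ i ∈ Finset.range N, ∏ j ∈ E, mmN (lo j) (hi j) (Qc i)
        ≤ ∑ i ∈ Finset.range N, ∏ j ∈ E, M j :=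
          Finset.sum_le_sum fun i _ => Finset.prod_le_prod' fun j _ => mmN_le _ _ _
      _ = N * ∏ j ∈ E, M j := by rw [Finset.sum_const, Finset.card_range, smul_eq_mul]
      _ ≤ (3*t-1) * E.card * ∏ j ∈ E, M j := by
          refine Nat.mul_le_mul_right _ ?_
          have h1 := hE.card_pos
          have h2 : (3*t-1) * 1 ≤ (3*t-1) * E.card := Nat.mul_le_mul_left _ h1
          omega
      _ ≤ _ := Nat.le_add_left _ _
  push_neg at hNt
  have ht0 : 0 < t := by omega
  have hdmN := Nat.div_add_mod N t
  have hmN : N % t < t := Nat.mod_lt _ ht0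
  set uu : ℕ → ℕ := fun i => if i < t * (N/t) then t * (i/t) else N - t with huu
  have hwin : ∀ i ∈ Finset.range N, uu i ≤ i ∧ i ≤ uu i + (t-1) ∧ uu i + (t-1) < N := by
    intro i hi
    rw [Finset.mem_range] at hi
    rw [huu]
    simp only []
    split
    · next h =>
      have hdmi := Nat.div_add_mod i t
      have hmi : i % t < t := Nat.mod_lt _ ht0
      have hlt : i / t < N / t := by
        have hdvd : t ∣ t * (N/t) := Dvd.intro _ rfl
        have h2 := Nat.div_lt_div_of_lt_of_dvd hdvd h
        rwa [Nat.mul_div_cancel_left _ ht0] at h2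
      have h5 : t * (i/t + 1) ≤ t * (N/t) := Nat.mul_le_mul_left t hlt
      rw [Nat.mul_succ] at h5
      omega
    · next h => omega
  have key : ∀ i ∈ Finset.range N,
      ∏ j ∈ E, mmN (lo j) (hi j) (Qc i)
      ≤ (t-1) * (∑ j ∈ E, ∏ i' ∈ E.erase j, M i')
        + ∑ j ∈ E, ssN (lo j) (hi j) (Qc (uu i)) (Qc (uu i + (t-1))) * ∏ i' ∈ E.erase j, M i' := by
    intro i hmem
    obtain ⟨hw1, hw2, hw3⟩ := hwin i hmem
    refine window_bound t E M lo hi (Qc i) (Qc (uu i)) (Qc (uu i + (t-1)))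
      (hQc hw1) (hQc hw2) ?_
    refine H _ _ (hQc (by omega)) ?_
    have hginj : Function.Injective
        (fun a : Fin t => σ (⟨uu i + a.val, by have := a.isLt; omega⟩ : Fin N)) := by
      intro a b hab
      have h1 := σ.injective hab
      rw [Fin.mk.injEq] at h1
      exact Fin.ext (by omega)
    calc t = ((Finset.univ : Finset (Fin t)).image
          (fun a : Fin t => σ (⟨uu i + a.val, by have := a.isLt; omega⟩ : Fin N))).card := by
          rw [Finset.card_image_of_injective _ hginj, Finset.card_univ, Fintype.card_fin]
      _ ≤ _ := by
          refine Finset.card_le_card ?_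
          intro z hz
          rw [Finset.mem_image] at hz
          obtain ⟨a, -, rfl⟩ := hz
          rw [Finset.mem_filter]
          have ha := a.isLt
          refine ⟨Finset.mem_univ _, ?_, ?_⟩
          · rw [← hQeq (uu i + a.val) (by omega)]
            exact hQc (Nat.le_add_right _ _)
          · rw [← hQeq (uu i + a.val) (by omega)]
            exact hQc (by omega)
  have hssum : ∀ j ∈ E,
      ∑ i ∈ Finset.range N, ssN (lo j) (hi j) (Qc (uu i)) (Qc (uu i + (t-1))) ≤ (3*t-1) * M j := by
    intro j hj
    have hsplit : t * (N/t) ≤ N := by omega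
    rw [Finset.range_eq_Ico, ← Finset.sum_Ico_consecutive _ (Nat.zero_le _) hsplit]
    have hA : ∑ i ∈ Finset.Ico 0 (t*(N/t)), ssN (lo j) (hi j) (Qc (uu i)) (Qc (uu i + (t-1)))
        ≤ 2 * t * M j := by
      have hcong : ∀ i ∈ Finset.Ico 0 (t*(N/t)),
          ssN (lo j) (hi j) (Qc (uu i)) (Qc (uu i + (t-1)))
          = (fun c => ssN (lo j) (hi j) (Qc (t*c)) (Qc (t*c + (t-1)))) (i / t) := by
        intro i hi
        rw [Finset.mem_Ico] at hi
        rw [huu]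
        simp only [if_pos hi.2]
      rw [Finset.sum_congr rfl hcong, ← Finset.range_eq_Ico, group_div t ht0 (fun c => ssN (lo j) (hi j) (Qc (t*c)) (Qc (t*c + (t-1)))) (N/t), ← Finset.mul_sum]
      have hcore : ∑ c ∈ Finset.range (N/t), ssN (lo j) (hi j) (Qc (t*c)) (Qc (t*c + (t-1)))
          ≤ 2 * M j := by
        have hsplit2 : ∀ c, ssN (lo j) (hi j) (Qc (t*c)) (Qc (t*c + (t-1)))
            ≤ ((Finset.univ : Finset (Fin (M j))).filter
                (fun b => Qc (t*c) < lo j b ∧ lo j b ≤ Qc (t*c + (t-1)))).card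
              + ((Finset.univ : Finset (Fin (M j))).filter
                (fun b => Qc (t*c) ≤ hi j b ∧ hi j b < Qc (t*c + (t-1)))).card := by
          intro c
          unfold ssN
          rw [Finset.filter_or]
          refine le_trans (le_of_eq ?_) (Finset.card_union_le _ _)
          congr 1
        have hmono2 : ∀ c c', c < c' → Qc (t*c + (t-1)) ≤ Qc (t*c') := by
          intro c c' hcc
          refine hQc ?_
          have h6 : t * (c+1) ≤ t * c' := Nat.mul_le_mul_left t hcc
          rw [Nat.mul_succ] at h6
          omega
        calc ∑ c ∈ Finset.range (N/t), ssN (lo j) (hi j) (Qc (t*c)) (Qc (t*c + (t-1)))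
            ≤ ∑ c ∈ Finset.range (N/t), (((Finset.univ : Finset (Fin (M j))).filter
                  (fun b => Qc (t*c) < lo j b ∧ lo j b ≤ Qc (t*c + (t-1)))).card
                + ((Finset.univ : Finset (Fin (M j))).filter
                  (fun b => Qc (t*c) ≤ hi j b ∧ hi j b < Qc (t*c + (t-1)))).card) :=
              Finset.sum_le_sum fun c _ => hsplit2 c
          _ = (∑ c ∈ Finset.range (N/t), ((Finset.univ : Finset (Fin (M j))).filter
                  (fun b => Qc (t*c) < lo j b ∧ lo j b ≤ Qc (t*c + (t-1)))).card)
                + ∑ c ∈ Finset.range (N/t), ((Finset.univ : Finset (Fin (M j))).filter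
                  (fun b => Qc (t*c) ≤ hi j b ∧ hi j b < Qc (t*c + (t-1)))).card :=
              Finset.sum_add_distrib
          _ ≤ M j + M j := by
              refine Nat.add_le_add ?_ ?_
              · refine sum_card_filter_le _ ?_
                intro c c' hcc b hb hb'
                have := hmono2 c c' hcc
                have := hb.2
                have := hb'.1
                linarith
              · refine sum_card_filter_le _ ?_
                intro c c' hcc b hb hb'
                have := hmono2 c c' hcc
                have := hb.2
                have := hb'.1
                linarith
          _ = 2 * M j := by ring
      calc t * ∑ c ∈ Finset.range (N/t), ssN (lo j) (hi j) (Qc (t*c)) (Qc (t*c + (t-1)))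
          ≤ t * (2 * M j) := Nat.mul_le_mul_left t hcore
        _ = 2 * t * M j := by ring
    have hB : ∑ i ∈ Finset.Ico (t*(N/t)) N, ssN (lo j) (hi j) (Qc (uu i)) (Qc (uu i + (t-1)))
        ≤ (t-1) * M j := by
      calc ∑ i ∈ Finset.Ico (t*(N/t)) N, ssN (lo j) (hi j) (Qc (uu i)) (Qc (uu i + (t-1)))
          ≤ (Finset.Ico (t*(N/t)) N).card • M j :=
            Finset.sum_le_card_nsmul _ _ _ fun i _ => ssN_le _ _ _ _
        _ = (N - t*(N/t)) * M j := by rw [Nat.card_Ico, smul_eq_mul]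
        _ ≤ (t-1) * M j := Nat.mul_le_mul_right _ (by omega)
    have hfin : 2*t*M j + (t-1)*M j = (3*t-1) * M j := by
      rw [← Nat.add_mul]
      congr 1
      omega
    omega
  calc ∑ i ∈ Finset.range N, ∏ j ∈ E, mmN (lo j) (hi j) (Qc i)
      ≤ ∑ i ∈ Finset.range N, ((t-1) * (∑ j ∈ E, ∏ i' ∈ E.erase j, M i')
          + ∑ j ∈ E, ssN (lo j) (hi j) (Qc (uu i)) (Qc (uu i + (t-1)))
            * ∏ i' ∈ E.erase j, M i') := Finset.sum_le_sum key
    _ = N * ((t-1) * (∑ j ∈ E, ∏ i' ∈ E.erase j, M i'))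
          + ∑ i ∈ Finset.range N, ∑ j ∈ E, ssN (lo j) (hi j) (Qc (uu i)) (Qc (uu i + (t-1)))
            * ∏ i' ∈ E.erase j, M i' := by
        rw [Finset.sum_add_distrib, Finset.sum_const, Finset.card_range, smul_eq_mul]
    _ = N * ((t-1) * (∑ j ∈ E, ∏ i' ∈ E.erase j, M i'))
          + ∑ j ∈ E, (∑ i ∈ Finset.range N, ssN (lo j) (hi j) (Qc (uu i)) (Qc (uu i + (t-1))))
            * ∏ i' ∈ E.erase j, M i' := by
        rw [Finset.sum_comm]
        congr 1
        exact Finset.sum_congr rfl fun j _ => (Finset.sum_mul _ _ _).symm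
    _ ≤ N * ((t-1) * (∑ j ∈ E, ∏ i' ∈ E.erase j, M i'))
          + ∑ j ∈ E, ((3*t-1) * M j) * ∏ i' ∈ E.erase j, M i' := by
        refine Nat.add_le_add_left (Finset.sum_le_sum fun j hj =>
          Nat.mul_le_mul_right _ (hssum j hj)) _
    _ = (t-1) * N * (∑ j ∈ E, ∏ i ∈ E.erase j, M i)
          + (3*t-1) * E.card * ∏ j ∈ E, M j := by
        congr 1
        · ring
        · calc ∑ j ∈ E, ((3*t-1) * M j) * ∏ i' ∈ E.erase j, M i'
              = ∑ j ∈ E, (3*t-1) * (M j * ∏ i' ∈ E.erase j, M i') :=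
                Finset.sum_congr rfl fun j _ => by ring
            _ = ∑ j ∈ E, (3*t-1) * ∏ i' ∈ E, M i' :=
                Finset.sum_congr rfl fun j hj => by rw [Finset.mul_prod_erase E M hj]
            _ = E.card * ((3*t-1) * ∏ i' ∈ E, M i') := by
                rw [Finset.sum_const, smul_eq_mul]
            _ = (3*t-1) * E.card * ∏ j ∈ E, M j := by ring

open Classical in
private lemma core (r t : ℕ) (hr : 2 ≤ r) (ht : 2 ≤ t) (n : Fin r → ℕ)
    (lo hi : ∀ j : Fin r, Fin (n j) → ℝ) (hlh : ∀ j i, lo j i ≤ hi j i)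
    (hfree : ¬ ∃ S : ∀ j, Finset (Fin (n j)), (∀ j, (S j).card = t) ∧
       ∀ f : ∀ j, Fin (n j), (∀ j, f j ∈ S j) →
         ∃ z : ℝ, ∀ j, lo j (f j) ≤ z ∧ z ≤ hi j (f j)) :
    ((Finset.univ : Finset (∀ j, Fin (n j))).filter
        (fun f : ∀ j, Fin (n j) => ∃ z : ℝ, ∀ j, lo j (f j) ≤ z ∧ z ≤ hi j (f j))).card
      ≤ (r-1) * (4*t-2) * ∑ j, ∏ i ∈ Finset.univ.erase j, n i := by
  classical
  have hsubA : ((Finset.univ : Finset (∀ j, Fin (n j))).filter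
        (fun f : ∀ j, Fin (n j) => ∃ z : ℝ, ∀ j, lo j (f j) ≤ z ∧ z ≤ hi j (f j)))
      ⊆ Finset.univ.biUnion (fun k : Fin r => Finset.univ.filter (fun f : ∀ j, Fin (n j) =>
          ∀ j, lo j (f j) ≤ hi k (f k) ∧ hi k (f k) ≤ hi j (f j))) := by
    intro f hf
    rw [Finset.mem_filter] at hf
    obtain ⟨-, z, hz⟩ := hf
    obtain ⟨k, -, hk⟩ := Finset.exists_min_image Finset.univ (fun j => hi j (f j))
      ⟨⟨0, by omega⟩, Finset.mem_univ _⟩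
    rw [Finset.mem_biUnion]
    refine ⟨k, Finset.mem_univ _, ?_⟩
    rw [Finset.mem_filter]
    exact ⟨Finset.mem_univ _, fun j => ⟨le_trans (hz j).1 (hz k).2, hk j (Finset.mem_univ _)⟩⟩
  have hB : ∀ k : Fin r, ((Finset.univ : Finset (∀ j, Fin (n j))).filter (fun f : ∀ j, Fin (n j) =>
      ∀ j, lo j (f j) ≤ hi k (f k) ∧ hi k (f k) ≤ hi j (f j))).card
      ≤ ∑ i : Fin (n k), ∏ j ∈ Finset.univ.erase k, mmN (lo j) (hi j) (hi k i) := by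
    intro k
    classical
    rw [Finset.card_eq_sum_card_fiberwise (f := fun f : ∀ j, Fin (n j) => f k) (t := Finset.univ)
      (fun x _ => Finset.mem_univ _)]
    refine Finset.sum_le_sum fun i _ => ?_
    set D : ∀ j : Fin r, Finset (Fin (n j)) := fun j => Finset.univ.filter (fun b =>
        if j = k then (b : ℕ) = (i : ℕ)
        else (lo j b ≤ hi k i ∧ hi k i ≤ hi j b)) with hD
    have hsub : (((Finset.univ : Finset (∀ j, Fin (n j))).filter (fun f : ∀ j, Fin (n j) =>
        ∀ j, lo j (f j) ≤ hi k (f k) ∧ hi k (f k) ≤ hi j (f j))).filter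
          (fun f => f k = i))
        ⊆ Fintype.piFinset D := by
      intro f hf
      rw [Finset.mem_filter, Finset.mem_filter] at hf
      obtain ⟨⟨-, hf1⟩, hf2⟩ := hf
      rw [Fintype.mem_piFinset]
      intro j
      rw [hD]
      rw [Finset.mem_filter]
      refine ⟨Finset.mem_univ _, ?_⟩
      by_cases hjk : j = k
      · subst hjk
        rw [if_pos rfl]
        exact congrArg Fin.val hf2
      · rw [if_neg hjk]
        have h3 := hf1 j
        rw [hf2] at h3
        exact h3
    calc (((Finset.univ : Finset (∀ j, Fin (n j))).filter (fun f : ∀ j, Fin (n j) =>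
        ∀ j, lo j (f j) ≤ hi k (f k) ∧ hi k (f k) ≤ hi j (f j))).filter
          (fun f => f k = i)).card
        ≤ (Fintype.piFinset D).card := Finset.card_le_card hsub
      _ = ∏ j, (D j).card := Fintype.card_piFinset _
      _ = (D k).card * ∏ j ∈ Finset.univ.erase k, (D j).card :=
          (Finset.mul_prod_erase Finset.univ _ (Finset.mem_univ k)).symm
      _ ≤ 1 * ∏ j ∈ Finset.univ.erase k, mmN (lo j) (hi j) (hi k i) := by
          refine Nat.mul_le_mul ?_ (le_of_eq (Finset.prod_congr rfl fun j hj => ?_))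
          · refine Finset.card_le_one.2 ?_
            intro a ha b hb
            rw [hD, Finset.mem_filter, if_pos rfl] at ha hb
            exact Fin.ext (ha.2.trans hb.2.symm)
          · rw [Finset.mem_erase] at hj
            rw [hD]
            unfold mmN
            exact congrArg Finset.card (Finset.filter_congr fun b _ => by rw [if_neg hj.1])
      _ = ∏ j ∈ Finset.univ.erase k, mmN (lo j) (hi j) (hi k i) := one_mul _
  have hH : ∀ k : Fin r, ∀ u v : ℝ, u ≤ v →
      t ≤ ((Finset.univ : Finset (Fin (n k))).filter (fun b => u ≤ hi k b ∧ hi k b ≤ v)).card →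
      ∃ j ∈ Finset.univ.erase k, llN (lo j) (hi j) u v + 1 ≤ t := by
    intro k u v huv hcard
    by_contra hcon
    push_neg at hcon
    refine hfree ?_
    have hchoose : ∀ j : Fin r, ∃ S : Finset (Fin (n j)),
        S ⊆ Finset.univ.filter (fun b => if j = k then (u ≤ hi j b ∧ hi j b ≤ v)
          else (lo j b ≤ u ∧ v ≤ hi j b)) ∧ S.card = t := by
      intro j
      by_cases hjk : j = k
      · subst hjk
        have hfilt : ((Finset.univ : Finset (Fin (n j))).filter (fun b => u ≤ hi j b ∧ hi j b ≤ v))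
            = ((Finset.univ : Finset (Fin (n j))).filter (fun b =>
                if j = j then (u ≤ hi j b ∧ hi j b ≤ v) else (lo j b ≤ u ∧ v ≤ hi j b))) :=
          Finset.filter_congr fun b _ => by simp
        rw [hfilt] at hcard
        exact Finset.exists_subset_card_eq hcard
      · have h4 := hcon j (Finset.mem_erase.2 ⟨hjk, Finset.mem_univ _⟩)
        have h5 : t ≤ llN (lo j) (hi j) u v := by omega
        unfold llN at h5
        have hfilt : ((Finset.univ : Finset (Fin (n j))).filter (fun b => lo j b ≤ u ∧ v ≤ hi j b))
            = ((Finset.univ : Finset (Fin (n j))).filter (fun b =>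
                if j = k then (u ≤ hi j b ∧ hi j b ≤ v) else (lo j b ≤ u ∧ v ≤ hi j b))) :=
          Finset.filter_congr fun b _ => by simp [hjk]
        rw [hfilt] at h5
        exact Finset.exists_subset_card_eq h5
    choose S hS1 hS2 using hchoose
    refine ⟨S, hS2, ?_⟩
    intro f hf
    refine ⟨hi k (f k), ?_⟩
    intro j
    have hfk := hS1 k (hf k)
    rw [Finset.mem_filter, if_pos rfl] at hfk
    by_cases hjk : j = k
    · subst hjk
      exact ⟨hlh j (f j), le_refl _⟩
    · have hfj := hS1 j (hf j)
      rw [Finset.mem_filter, if_neg hjk] at hfj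
      exact ⟨le_trans hfj.2.1 hfk.2.1, le_trans hfk.2.2 hfj.2.2⟩
  have hEne : ∀ k : Fin r, (Finset.univ.erase k).Nonempty := by
    intro k
    obtain ⟨j, hj⟩ := Fintype.exists_ne_of_one_lt_card (by simp; omega) k
    exact ⟨j, Finset.mem_erase.2 ⟨hj, Finset.mem_univ _⟩⟩
  have hcardE : ∀ k : Fin r, (Finset.univ.erase k).card = r - 1 := by
    intro k
    rw [Finset.card_erase_of_mem (Finset.mem_univ k), Finset.card_univ, Fintype.card_fin]
  have hRstep : ∀ k : Fin r, n k * ∑ j ∈ Finset.univ.erase k, ∏ i ∈ (Finset.univ.erase k).erase j, n i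
      = ∑ j ∈ Finset.univ.erase k, ∏ i ∈ Finset.univ.erase j, n i := by
    intro k
    rw [Finset.mul_sum]
    refine Finset.sum_congr rfl fun j hj => ?_
    rw [Finset.mem_erase] at hj
    rw [Finset.erase_right_comm]
    exact Finset.mul_prod_erase _ _ (Finset.mem_erase.2 ⟨fun h => hj.1 h.symm, Finset.mem_univ _⟩)
  have hAeq : ∑ k : Fin r, ∑ j ∈ Finset.univ.erase k, ∏ i ∈ Finset.univ.erase j, n i
      = (r-1) * ∑ j : Fin r, ∏ i ∈ Finset.univ.erase j, n i := by
    have h6 : ∀ k : Fin r, ∑ j ∈ Finset.univ.erase k, ∏ i ∈ Finset.univ.erase j, n i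
        + ∏ i ∈ Finset.univ.erase k, n i = ∑ j : Fin r, ∏ i ∈ Finset.univ.erase j, n i :=
      fun k => Finset.sum_erase_add Finset.univ _ (Finset.mem_univ k)
    have h7 : (∑ k : Fin r, ∑ j ∈ Finset.univ.erase k, ∏ i ∈ Finset.univ.erase j, n i)
        + ∑ k : Fin r, ∏ i ∈ Finset.univ.erase k, n i
        = r * ∑ j : Fin r, ∏ i ∈ Finset.univ.erase j, n i := by
      rw [← Finset.sum_add_distrib]
      rw [Finset.sum_congr rfl fun k _ => h6 k]
      rw [Finset.sum_const, Finset.card_univ, Fintype.card_fin, smul_eq_mul]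
    have h8 : r * ∑ j : Fin r, ∏ i ∈ Finset.univ.erase j, n i
        = (r-1) * (∑ j : Fin r, ∏ i ∈ Finset.univ.erase j, n i)
          + ∑ j : Fin r, ∏ i ∈ Finset.univ.erase j, n i := by
      have h9 : r - 1 + 1 = r := by omega
      calc r * ∑ j : Fin r, ∏ i ∈ Finset.univ.erase j, n i
          = (r - 1 + 1) * ∑ j : Fin r, ∏ i ∈ Finset.univ.erase j, n i := by rw [h9]
        _ = (r-1) * (∑ j : Fin r, ∏ i ∈ Finset.univ.erase j, n i)
            + ∑ j : Fin r, ∏ i ∈ Finset.univ.erase j, n i := by ring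
    omega
  calc ((Finset.univ : Finset (∀ j, Fin (n j))).filter
        (fun f : ∀ j, Fin (n j) => ∃ z : ℝ, ∀ j, lo j (f j) ≤ z ∧ z ≤ hi j (f j))).card
      ≤ (Finset.univ.biUnion (fun k : Fin r => Finset.univ.filter (fun f : ∀ j, Fin (n j) =>
          ∀ j, lo j (f j) ≤ hi k (f k) ∧ hi k (f k) ≤ hi j (f j)))).card :=
        Finset.card_le_card hsubA
    _ ≤ ∑ k : Fin r, (Finset.univ.filter (fun f : ∀ j, Fin (n j) =>
          ∀ j, lo j (f j) ≤ hi k (f k) ∧ hi k (f k) ≤ hi j (f j))).card :=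
        Finset.card_biUnion_le
    _ ≤ ∑ k : Fin r, ∑ i : Fin (n k), ∏ j ∈ Finset.univ.erase k, mmN (lo j) (hi j) (hi k i) :=
        Finset.sum_le_sum fun k _ => hB k
    _ ≤ ∑ k : Fin r, ((t-1) * (n k) * (∑ j ∈ Finset.univ.erase k, ∏ i ∈ (Finset.univ.erase k).erase j, n i)
          + (3*t-1) * (Finset.univ.erase k).card * ∏ j ∈ Finset.univ.erase k, n j) :=
        Finset.sum_le_sum fun k _ =>
          stab t ht (Finset.univ.erase k) (hEne k) n lo hi (n k) (hi k) (hH k)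
    _ = ∑ k : Fin r, ((t-1) * ∑ j ∈ Finset.univ.erase k, ∏ i ∈ Finset.univ.erase j, n i
          + (3*t-1) * (r-1) * ∏ j ∈ Finset.univ.erase k, n j) := by
        refine Finset.sum_congr rfl fun k _ => ?_
        rw [mul_assoc, hRstep k, hcardE k]
    _ = (t-1) * (∑ k : Fin r, ∑ j ∈ Finset.univ.erase k, ∏ i ∈ Finset.univ.erase j, n i)
          + (3*t-1) * (r-1) * ∑ k : Fin r, ∏ j ∈ Finset.univ.erase k, n j := by
        rw [Finset.sum_add_distrib, Finset.mul_sum, Finset.mul_sum]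
    _ ≤ (r-1) * (4*t-2) * ∑ j : Fin r, ∏ i ∈ Finset.univ.erase j, n i := by
        rw [hAeq]
        obtain ⟨t2, rfl⟩ : ∃ t2, t = t2 + 2 := ⟨t-2, by omega⟩
        obtain ⟨r2, rfl⟩ : ∃ r2, r = r2 + 2 := ⟨r-2, by omega⟩
        have e1 : t2 + 2 - 1 = t2 + 1 := by omega
        have e2 : 3*(t2+2) - 1 = 3*t2 + 5 := by omega
        have e3 : 4*(t2+2) - 2 = 4*t2 + 6 := by omega
        have e4 : r2 + 2 - 1 = r2 + 1 := by omega
        rw [e1, e2, e3, e4]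
        exact le_of_eq (by ring)

/-- the one-dimensional case, `e(H) < 4^{r-1} · g_t(n_1,…,n_r)` for any
direction-vector `F` in `ℝ¹`. -/

theorem stmt11 (r t : ℕ) (hr : 2 ≤ r) (ht : 2 ≤ t)
    (F : Fin r → Set (Fin 1)) (n : Fin r → ℕ) (hn : ∀ j, 0 < n j)
    (B : ∀ j : Fin r, Fin (n j) → Set (Fin 1 → ℝ))
    (hB : ∀ j k, IsBoxDir (B j k) (F j))
    (hfree : KFree t n B) :
    (hyperedgeCount n B : ℝ) < 4 ^ (r - 1) * gZ t n := by
  classical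
  choose lov hiv hlh hBeq hFd using hB
  have hmem : ∀ (j : Fin r) (k : Fin (n j)) (x : Fin 1 → ℝ),
      x ∈ B j k ↔ (lov j k 0 ≤ x 0 ∧ x 0 ≤ hiv j k 0) := by
    intro j k x
    rw [hBeq j k]
    constructor
    · intro hx
      exact ⟨(hx 0).1, (hx 0).2⟩
    · intro hx i
      have hi0 : i = 0 := Subsingleton.elim i 0
      subst hi0
      exact ⟨hx.1, hx.2⟩
  have hNE : ∀ f : ∀ j, Fin (n j), (⋂ j, B j (f j)).Nonempty ↔
      ∃ z : ℝ, ∀ j, lov j (f j) 0 ≤ z ∧ z ≤ hiv j (f j) 0 := by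
    intro f
    constructor
    · rintro ⟨x, hx⟩
      rw [Set.mem_iInter] at hx
      exact ⟨x 0, fun j => (hmem j (f j) x).1 (hx j)⟩
    · rintro ⟨z, hz⟩
      refine ⟨fun _ => z, ?_⟩
      rw [Set.mem_iInter]
      intro j
      exact (hmem j (f j) (fun _ => z)).2 (hz j)
  have hfree' : ¬ ∃ S : ∀ j, Finset (Fin (n j)), (∀ j, (S j).card = t) ∧
      ∀ f : ∀ j, Fin (n j), (∀ j, f j ∈ S j) →
        ∃ z : ℝ, ∀ j, lov j (f j) 0 ≤ z ∧ z ≤ hiv j (f j) 0 := by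
    rintro ⟨S, hS1, hS2⟩
    exact hfree ⟨S, hS1, fun f hf => (hNE f).2 (hS2 f hf)⟩
  have h0r : 0 < r := by omega
  have hSR : 0 < ∑ j : Fin r, ∏ i ∈ Finset.univ.erase j, n i := by
    have hpos : 0 < ∏ i ∈ Finset.univ.erase (⟨0, h0r⟩ : Fin r), n i :=
      Finset.prod_pos fun i _ => hn i
    calc 0 < ∏ i ∈ Finset.univ.erase (⟨0, h0r⟩ : Fin r), n i := hpos
      _ ≤ ∑ j : Fin r, ∏ i ∈ Finset.univ.erase j, n i :=
        Finset.single_le_sum (f := fun j : Fin r => ∏ i ∈ Finset.univ.erase j, n i)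
          (fun _ _ => Nat.zero_le _) (Finset.mem_univ _)
  have hcoef : (r-1)*(4*t-2) < 4^(r-1)*t := by
    have hc3 : (r-1)*(4*t-2) < (r-1)*(4*t) :=
      mul_lt_mul_of_pos_left (by omega) (by omega)
    have h5 : r - 2 < 2^(r-2) := Nat.lt_two_pow_self
    have h6 : 2^(r-2) ≤ 4^(r-2) := Nat.pow_le_pow_left (by omega) _
    have h7 : r - 1 ≤ 4^(r-2) := by omega
    have hc4 : (r-1)*4 ≤ 4^(r-1) := by
      calc (r-1)*4 ≤ 4^(r-2)*4 := Nat.mul_le_mul_right _ h7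
        _ = 4^(r-2+1) := (pow_succ 4 (r-2)).symm
        _ = 4^(r-1) := by congr 1; omega
    calc (r-1)*(4*t-2) < (r-1)*(4*t) := hc3
      _ = ((r-1)*4)*t := by ring
      _ ≤ 4^(r-1)*t := Nat.mul_le_mul_right _ hc4
  have hgZ : gZ t n = (t:ℝ) * ∑ j : Fin r, ((∏ i ∈ Finset.univ.erase j, n i : ℕ) : ℝ) := by
    unfold gZ
    rw [mul_assoc, Finset.mul_sum]
    congr 1
    refine Finset.sum_congr rfl fun j _ => ?_
    have hnj : ((n j : ℕ) : ℝ) ≠ 0 := Nat.cast_ne_zero.2 (hn j).ne'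
    rw [Nat.cast_prod]
    rw [← Finset.mul_prod_erase Finset.univ (fun i => ((n i : ℕ):ℝ)) (Finset.mem_univ j)]
    field_simp
  have hcore := core r t hr ht n (fun j k => lov j k 0) (fun j k => hiv j k 0)
    (fun j i => hlh j i 0) hfree'
  have hcount : hyperedgeCount n B = ((Finset.univ : Finset (∀ j, Fin (n j))).filter
      (fun f : ∀ j, Fin (n j) =>
        ∃ z : ℝ, ∀ j, lov j (f j) 0 ≤ z ∧ z ≤ hiv j (f j) 0)).card := by
    unfold hyperedgeCount
    rw [Nat.card_eq_fintype_card, Fintype.card_subtype]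
    exact congrArg Finset.card (Finset.filter_congr fun f _ => by rw [hNE f])
  rw [hcount]
  calc (((Finset.univ : Finset (∀ j, Fin (n j))).filter
      (fun f : ∀ j, Fin (n j) =>
        ∃ z : ℝ, ∀ j, lov j (f j) 0 ≤ z ∧ z ≤ hiv j (f j) 0)).card : ℝ)
      ≤ (((r-1) * (4*t-2) : ℕ) : ℝ) * ((∑ j : Fin r, ∏ i ∈ Finset.univ.erase j, n i : ℕ) : ℝ) := by
        rw [← Nat.cast_mul]
        exact_mod_cast hcore
    _ < ((4^(r-1)*t : ℕ) : ℝ) * ((∑ j : Fin r, ∏ i ∈ Finset.univ.erase j, n i : ℕ) : ℝ) := by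
        refine mul_lt_mul_of_pos_right ?_ ?_
        · exact_mod_cast hcoef
        · exact_mod_cast hSR
    _ = 4 ^ (r - 1) * gZ t n := by
        rw [hgZ]
        push_cast
        ring
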